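/- The sequence H₂((A,B,ε);M) → H₁(B,M) → H₁(A,M) is exact at H₁(B,M): the kernel of ε_* equals the image of Ψ. -/

import Mathlib

/-!
STATEMENT 11: The sequence H₂((A,B,ε);M) → H₁(B,M) → H₁(A,M) is exact at H₁(B,M):
the kernel of ε_* equals the image of Ψ.

Here (A,B,ε) is a triple over a commutative ring k and M is an A-bimodule on which k
acts centrally and which is B-symmetric; H₂((A,B,ε);M) = ker ∂₂ / im ∂₃,
H₁(B,M) = (M⊗B)/im d₂^B (the degree-1 differential for B vanishes since M is
B-symmetric) and H₁(A,M) = ker d₁ / im d₂.  Ψ is induced by m⊗a⊗b⊗α ↦ bma⊗α and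
ε_* by m⊗α ↦ m⊗ε(α).  All chain maps and induced maps are quantified universally,
characterized by their values on pure tensors (resp. on classes).
-/

open TensorProduct MulOpposite

set_option maxSynthPendingDepth 8


private theorem TPind {k : Type*} [CommRing k] {X Y Q : Type*}
    [AddCommGroup X] [AddCommGroup Y] [AddCommGroup Q]
    [Module k X] [Module k Y] [Module k Q]
    (F : X ⊗[k] Y →ₗ[k] Q) (S : Submodule k Q)
    (h : ∀ (x : X) (y : Y), F (x ⊗ₜ[k] y) ∈ S) : ∀ z, F z ∈ S := by
  intro z
  induction z using TensorProduct.induction_on with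
  | zero => simpa using S.zero_mem
  | tmul x y => exact h x y
  | add a b ha hb => rw [map_add]; exact S.add_mem ha hb

private theorem TPind2 {k : Type*} [CommRing k] {X Y Z Q : Type*}
    [AddCommGroup X] [AddCommGroup Y] [AddCommGroup Z] [AddCommGroup Q]
    [Module k X] [Module k Y] [Module k Z] [Module k Q]
    (F : (X ⊗[k] Y) ⊗[k] Z →ₗ[k] Q) (S : Submodule k Q)
    (h : ∀ x y z, F ((x ⊗ₜ[k] y) ⊗ₜ[k] z) ∈ S) : ∀ v, F v ∈ S :=
  TPind F S (fun n z =>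
    TPind (F ∘ₗ (TensorProduct.mk k (X ⊗[k] Y) Z).flip z) S (fun x y => h x y z) n)

private theorem TPind3 {k : Type*} [CommRing k] {X Y Z W Q : Type*}
    [AddCommGroup X] [AddCommGroup Y] [AddCommGroup Z] [AddCommGroup W] [AddCommGroup Q]
    [Module k X] [Module k Y] [Module k Z] [Module k W] [Module k Q]
    (F : ((X ⊗[k] Y) ⊗[k] Z) ⊗[k] W →ₗ[k] Q) (S : Submodule k Q)
    (h : ∀ x y z w, F (((x ⊗ₜ[k] y) ⊗ₜ[k] z) ⊗ₜ[k] w) ∈ S) : ∀ v, F v ∈ S :=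
  TPind F S (fun n w =>
    TPind2 (F ∘ₗ (TensorProduct.mk k ((X ⊗[k] Y) ⊗[k] Z) W).flip w) S (fun x y z => h x y z w) n)

set_option maxHeartbeats 1600000 in
theorem secondaryHochschild_exact_at_H1B
    (k : Type*) [CommRing k]
    (A : Type*) [Ring A] [Algebra k A]
    (B : Type*) [CommRing B] [Algebra k B]
    (ε : B →ₐ[k] A) (hcen : ∀ (b : B) (a : A), ε b * a = a * ε b)
    (M : Type*) [AddCommGroup M] [Module k M]
    [Module A M] [Module Aᵐᵒᵖ M] [SMulCommClass A Aᵐᵒᵖ M]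
    [IsScalarTower k A M] [IsScalarTower k Aᵐᵒᵖ M]
    (hsymm : ∀ (b : B) (m : M), ε b • m = op (ε b) • m)
    -- the usual Hochschild differentials d₁, d₂ for A
    (d1 : M ⊗[k] A →ₗ[k] M)
    (hd1 : ∀ (m : M) (a : A), d1 (m ⊗ₜ[k] a) = op a • m - a • m)
    (d2 : M ⊗[k] A ⊗[k] A →ₗ[k] M ⊗[k] A)
    (hd2 : ∀ (m : M) (a b : A),
      d2 (m ⊗ₜ[k] a ⊗ₜ[k] b) =
        (op a • m) ⊗ₜ[k] b - m ⊗ₜ[k] (a * b) + (b • m) ⊗ₜ[k] a)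
    -- the secondary Hochschild differentials ∂₂, ∂₃
    (p2 : M ⊗[k] A ⊗[k] A ⊗[k] B →ₗ[k] M ⊗[k] A)
    (hp2 : ∀ (m : M) (a b : A) (α : B),
      p2 (m ⊗ₜ[k] a ⊗ₜ[k] b ⊗ₜ[k] α) =
        (op (a * ε α) • m) ⊗ₜ[k] b - m ⊗ₜ[k] (a * ε α * b) + ((b * ε α) • m) ⊗ₜ[k] a)
    (p3 : M ⊗[k] A ⊗[k] A ⊗[k] A ⊗[k] B ⊗[k] B ⊗[k] B →ₗ[k] M ⊗[k] A ⊗[k] A ⊗[k] B)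
    (hp3 : ∀ (m : M) (a b c : A) (α β γ : B),
      p3 (m ⊗ₜ[k] a ⊗ₜ[k] b ⊗ₜ[k] c ⊗ₜ[k] α ⊗ₜ[k] β ⊗ₜ[k] γ) =
        (op (a * ε (α * β)) • m) ⊗ₜ[k] b ⊗ₜ[k] c ⊗ₜ[k] γ
        - m ⊗ₜ[k] (a * ε α * b) ⊗ₜ[k] c ⊗ₜ[k] (β * γ)
        + m ⊗ₜ[k] a ⊗ₜ[k] (b * ε γ * c) ⊗ₜ[k] (α * β)
        - ((c * ε (β * γ)) • m) ⊗ₜ[k] a ⊗ₜ[k] b ⊗ₜ[k] α)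
    -- the Hochschild differential d₂^B for B with coefficients in M
    (d2B : M ⊗[k] B ⊗[k] B →ₗ[k] M ⊗[k] B)
    (hd2B : ∀ (m : M) (α β : B),
      d2B (m ⊗ₜ[k] α ⊗ₜ[k] β) =
        (op (ε α) • m) ⊗ₜ[k] β - m ⊗ₜ[k] (α * β) + (ε β • m) ⊗ₜ[k] α)
    -- the chain-level map m⊗a⊗b⊗α ↦ bma⊗α
    (ψ : M ⊗[k] A ⊗[k] A ⊗[k] B →ₗ[k] M ⊗[k] B)
    (hψ : ∀ (m : M) (a b : A) (α : B),
      ψ (m ⊗ₜ[k] a ⊗ₜ[k] b ⊗ₜ[k] α) = (b • op a • m) ⊗ₜ[k] α)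
    -- the chain-level map m⊗α ↦ m⊗ε(α)
    (e : M ⊗[k] B →ₗ[k] M ⊗[k] A)
    (he : ∀ (m : M) (α : B), e (m ⊗ₜ[k] α) = m ⊗ₜ[k] ε α)
    -- the induced map Ψ : H₂((A,B,ε);M) → H₁(B,M)
    (Psi : (↥(LinearMap.ker p2) ⧸ (LinearMap.range p3).comap (LinearMap.ker p2).subtype)
        →ₗ[k] ((M ⊗[k] B) ⧸ LinearMap.range d2B))
    (hPsi : ∀ (x : M ⊗[k] A ⊗[k] A ⊗[k] B) (hx : x ∈ LinearMap.ker p2),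
      Psi (Submodule.Quotient.mk ⟨x, hx⟩) = Submodule.Quotient.mk (ψ x))
    -- the induced map ε_* : H₁(B,M) → H₁(A,M)
    (εs : ((M ⊗[k] B) ⧸ LinearMap.range d2B)
        →ₗ[k] (↥(LinearMap.ker d1) ⧸ (LinearMap.range d2).comap (LinearMap.ker d1).subtype))
    (hεs : ∀ (z : M ⊗[k] B) (hz : e z ∈ LinearMap.ker d1),
      εs (Submodule.Quotient.mk z) = Submodule.Quotient.mk ⟨e z, hz⟩) :
    LinearMap.ker εs = LinearMap.range Psi := by
  
  classical
  set j : M ⊗[k] B →ₗ[k] M ⊗[k] A ⊗[k] A ⊗[k] B :=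
    LinearMap.rTensor B (((TensorProduct.mk k (M ⊗[k] A) A).flip (1 : A)) ∘ₗ
      ((TensorProduct.mk k M A).flip (1 : A)))
    with hjdef
  set t : M ⊗[k] B →ₗ[k] M ⊗[k] A ⊗[k] A ⊗[k] B :=
    ((TensorProduct.mk k (M ⊗[k] A ⊗[k] A) B).flip (1 : B)) ∘ₗ
      ((TensorProduct.mk k (M ⊗[k] A) A).flip (1 : A)) ∘ₗ LinearMap.lTensor M ε.toLinearMap
    with htdef
  set ι : M ⊗[k] A ⊗[k] A →ₗ[k] M ⊗[k] A ⊗[k] A ⊗[k] B :=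
    (TensorProduct.mk k (M ⊗[k] A ⊗[k] A) B).flip (1 : B)
    with hιdef
  have hj : ∀ (m : M) (α : B), j (m ⊗ₜ[k] α) = m ⊗ₜ[k] (1 : A) ⊗ₜ[k] (1 : A) ⊗ₜ[k] α := by
    intro m α
    rw [hjdef]
    simp [LinearMap.rTensor_tmul, TensorProduct.mk_apply]
  have ht : ∀ (m : M) (α : B), t (m ⊗ₜ[k] α) = m ⊗ₜ[k] (ε α) ⊗ₜ[k] (1 : A) ⊗ₜ[k] (1 : B) := by
    intro m α
    rw [htdef]
    simp [hιdef, LinearMap.lTensor_tmul, TensorProduct.mk_apply]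
  have hι : ∀ (m : M) (a b : A), ι (m ⊗ₜ[k] a ⊗ₜ[k] b) = m ⊗ₜ[k] a ⊗ₜ[k] b ⊗ₜ[k] (1 : B) := by
    intro m a b
    rw [hιdef]
    simp [LinearMap.lTensor_tmul, TensorProduct.mk_apply]
  -- e always lands in ker d1
  have heker : ∀ z : M ⊗[k] B, e z ∈ LinearMap.ker d1 := by
    intro z
    have h0 : ∀ z : M ⊗[k] B, (d1 ∘ₗ e) z ∈ (⊥ : Submodule k M) := by
      refine TPind _ _ (fun m α => ?_)
      simp [LinearMap.comp_apply, he, hd1, hsymm]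
    rw [LinearMap.mem_ker]
    simpa using h0 z
  -- characterization of ker εs on classes
  have hεs0 : ∀ z : M ⊗[k] B,
      (εs (Submodule.Quotient.mk z) = 0 ↔ e z ∈ LinearMap.range d2) := by
    intro z
    rw [hεs z (heker z), Submodule.Quotient.mk_eq_zero, Submodule.mem_comap]
    exact Iff.rfl
  -- key homotopy identity: e (ψ x) + p2 x ∈ range d2
  have key1 : ∀ x : M ⊗[k] A ⊗[k] A ⊗[k] B,
      (e ∘ₗ ψ + p2) x ∈ LinearMap.range d2 := by
    refine TPind3 _ _ (fun m a b α => ?_)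
    simp only [LinearMap.add_apply, LinearMap.comp_apply]
    refine ⟨(op a • m) ⊗ₜ[k] (ε α) ⊗ₜ[k] b + m ⊗ₜ[k] a ⊗ₜ[k] (ε α * b), ?_⟩
    rw [map_add, hd2, hd2, hψ, he, hp2]
    rw [← mul_smul, ← MulOpposite.op_mul, ← mul_assoc a (ε α) b, hcen α b]
    abel
  -- p2 ∘ ι = d2
  have hp2ι : ∀ w : M ⊗[k] A ⊗[k] A, p2 (ι w) = d2 w := by
    have h0 : ∀ w : M ⊗[k] A ⊗[k] A, (p2 ∘ₗ ι - d2) w ∈ (⊥ : Submodule k (M ⊗[k] A)) := by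
      refine TPind2 _ _ (fun m a b => ?_)
      simp [LinearMap.sub_apply, LinearMap.comp_apply, hι, hp2, hd2]
    intro w
    have := h0 w
    rw [Submodule.mem_bot, LinearMap.sub_apply, LinearMap.comp_apply, sub_eq_zero] at this
    exact this
  -- ψ ∘ ι lands in range d2B
  have hψι : ∀ w : M ⊗[k] A ⊗[k] A, (ψ ∘ₗ ι) w ∈ LinearMap.range d2B := by
    refine TPind2 _ _ (fun m a b => ?_)
    refine ⟨(b • op a • m) ⊗ₜ[k] (1 : B) ⊗ₜ[k] (1 : B), ?_⟩
    rw [hd2B, LinearMap.comp_apply, hι, hψ]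
    simp
  -- ψ ∘ t lands in range d2B
  have hψt : ∀ z : M ⊗[k] B, (ψ ∘ₗ t) z ∈ LinearMap.range d2B := by
    refine TPind _ _ (fun m α => ?_)
    refine ⟨m ⊗ₜ[k] α ⊗ₜ[k] (1 : B), ?_⟩
    rw [hd2B, LinearMap.comp_apply, ht, hψ]
    simp
  -- ψ ∘ j = id
  have hψj : ∀ z : M ⊗[k] B, ψ (j z) = z := by
    have h0 : ∀ z : M ⊗[k] B,
        (ψ ∘ₗ j - (LinearMap.id : M ⊗[k] B →ₗ[k] M ⊗[k] B)) z ∈ (⊥ : Submodule k (M ⊗[k] B)) := by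
      refine TPind _ _ (fun m α => ?_)
      simp [LinearMap.sub_apply, LinearMap.comp_apply, hj, hψ]
    intro z
    have := h0 z
    rw [Submodule.mem_bot, LinearMap.sub_apply, LinearMap.comp_apply, sub_eq_zero] at this
    simpa using this
  -- the main chain identity on j and t
  have h1 : ∀ z : M ⊗[k] B,
      p2 (j z) - p2 (t z) - p2 (t z) + e z = 0 := by
    have h0 : ∀ z : M ⊗[k] B,
        (p2 ∘ₗ j - p2 ∘ₗ t - p2 ∘ₗ t + e) z ∈ (⊥ : Submodule k (M ⊗[k] A)) := by
      refine TPind _ _ (fun m α => ?_)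
      simp only [LinearMap.add_apply, LinearMap.sub_apply, LinearMap.comp_apply,
        hj, ht, hp2, he, map_one, one_mul, mul_one, one_smul, hsymm, Submodule.mem_bot]
      abel
    intro z
    have := h0 z
    simpa [LinearMap.add_apply, LinearMap.sub_apply, LinearMap.comp_apply] using this
  apply le_antisymm
  · -- ker εs ≤ range Psi
    rintro y hy
    obtain ⟨z, rfl⟩ := Submodule.Quotient.mk_surjective _ y
    rw [LinearMap.mem_ker, hεs0] at hy
    obtain ⟨w, hw⟩ := hy
    have hx0 : (j z - t z - t z + ι w) ∈ LinearMap.ker p2 := by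
      rw [LinearMap.mem_ker, map_add, map_sub, map_sub, hp2ι, hw]
      exact h1 z
    refine ⟨Submodule.Quotient.mk ⟨_, hx0⟩, ?_⟩
    rw [hPsi _ hx0, Submodule.Quotient.eq]
    have hsub : ψ (j z - t z - t z + ι w) - z
        = (ψ ∘ₗ ι) w - (ψ ∘ₗ t) z - (ψ ∘ₗ t) z := by
      rw [map_add, map_sub, map_sub, hψj]
      simp only [LinearMap.comp_apply]
      abel
    rw [hsub]
    exact sub_mem (sub_mem (hψι w) (hψt z)) (hψt z)
  · -- range Psi ≤ ker εs
    rintro y ⟨q, rfl⟩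
    obtain ⟨v, rfl⟩ := Submodule.Quotient.mk_surjective _ q
    obtain ⟨x, hx⟩ := v
    rw [LinearMap.mem_ker, hPsi x hx, hεs0]
    have h2 := key1 x
    rw [LinearMap.add_apply, LinearMap.comp_apply, LinearMap.mem_ker.mp hx, add_zero] at h2
    exact h2
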